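/- Let L be a free abelian group of finite rank with ℤ-valued symmetric bilinear form ⟨·,·⟩, h = ℂ⊗L, and B_L = ℂ[L]⊗S(ĥ⁻) with the differential algebra structure where L(−1)(e^α⊗u) = e^α⊗α(−1)u + e^α⊗L(−1)u. Let A be any commutative associative ℂ-algebra with a derivation ∂, and let f: ℂ[L] → A be an algebra homomorphism sending each e^α to a unit. Then f extends uniquely to a homomorphism of differential algebras F: B_L → A (i.e., F is an algebra homomorphism with F∘L(−1) = ∂∘F), determined by F(α(−1−n)) = (1/n!)∂ⁿ(f(e^{−α})∂f(e^α)) for α ∈ L, n ≥ 0. -/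

import Mathlib

open scoped TensorProduct

/-- The element `α(−1−n)` of `S(ĥ⁻)`, modelled in `MvPolynomial (ι × ℕ) ℂ` where
`X (i, n)` represents `bᵢ(−1−n)` for a basis `bᵢ` of the lattice `L = ι →₀ ℤ`. -/
noncomputable def latticeGen {ι : Type*} [Fintype ι] (α : ι →₀ ℤ) (n : ℕ) :
    MvPolynomial (ι × ℕ) ℂ :=
  ∑ i : ι, (α i : ℂ) • MvPolynomial.X (i, n)

set_option maxHeartbeats 2000000 in
/-- universal property of the differential algebra
`B_L = ℂ[L] ⊗ S(ĥ⁻)` (here `L = ι →₀ ℤ` is free abelian of finite rank,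
`S(ĥ⁻) = MvPolynomial (ι × ℕ) ℂ`, and `D = L(−1)` is the derivation with
`D(e^α ⊗ 1) = e^α ⊗ α(−1)` and `D(α(−1−n)) = (n+1)α(−2−n)`): every algebra homomorphism
`f : ℂ[L] → A` into a commutative differential algebra `(A,∂)` sending each `e^α` to a
unit extends uniquely to a differential algebra homomorphism `F : B_L → A`, and `F` is
given by `F(α(−1−n)) = (1/n!)∂ⁿ(f(e^{−α})∂f(e^α))`. -/
theorem lattice_differential_algebra_universal_property
    {ι : Type*} [Fintype ι] [DecidableEq ι]
    (Bf : (ι →₀ ℤ) →+ (ι →₀ ℤ) →+ ℤ) (hsym : ∀ a b, Bf a b = Bf b a)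
    (D : (AddMonoidAlgebra ℂ (ι →₀ ℤ) ⊗[ℂ] MvPolynomial (ι × ℕ) ℂ) →ₗ[ℂ]
         (AddMonoidAlgebra ℂ (ι →₀ ℤ) ⊗[ℂ] MvPolynomial (ι × ℕ) ℂ))
    (hDder : ∀ x y, D (x * y) = D x * y + x * D y)
    (hD1 : ∀ α : ι →₀ ℤ,
      D (AddMonoidAlgebra.single α 1 ⊗ₜ[ℂ] 1) =
        AddMonoidAlgebra.single α 1 ⊗ₜ[ℂ] latticeGen α 0)
    (hD2 : ∀ (i : ι) (n : ℕ),
      D (1 ⊗ₜ[ℂ] MvPolynomial.X (i, n)) =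
        ((n : ℂ) + 1) • (1 ⊗ₜ[ℂ] MvPolynomial.X (i, n + 1)))
    {A : Type*} [CommRing A] [Algebra ℂ A]
    (dd : Module.End ℂ A) (hdd : ∀ a b : A, dd (a * b) = dd a * b + a * dd b)
    (f : AddMonoidAlgebra ℂ (ι →₀ ℤ) →ₐ[ℂ] A)
    (hunit : ∀ α : ι →₀ ℤ, IsUnit (f (AddMonoidAlgebra.single α 1))) :
    (∃! F : (AddMonoidAlgebra ℂ (ι →₀ ℤ) ⊗[ℂ] MvPolynomial (ι × ℕ) ℂ) →ₐ[ℂ] A,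
      (∀ g : AddMonoidAlgebra ℂ (ι →₀ ℤ), F (g ⊗ₜ[ℂ] 1) = f g) ∧
      (∀ x, F (D x) = dd (F x))) ∧
    (∀ F : (AddMonoidAlgebra ℂ (ι →₀ ℤ) ⊗[ℂ] MvPolynomial (ι × ℕ) ℂ) →ₐ[ℂ] A,
      (∀ g : AddMonoidAlgebra ℂ (ι →₀ ℤ), F (g ⊗ₜ[ℂ] 1) = f g) →
      (∀ x, F (D x) = dd (F x)) →
      ∀ (α : ι →₀ ℤ) (n : ℕ),
        F (1 ⊗ₜ[ℂ] latticeGen α n) =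
          ((n.factorial : ℂ))⁻¹ •
            (dd ^ n) (f (AddMonoidAlgebra.single (-α) 1) *
              dd (f (AddMonoidAlgebra.single α 1)))) := by
  classical
  set u : (ι →₀ ℤ) → A := fun α => f (AddMonoidAlgebra.single α 1) with hu
  have humul : ∀ α β, u (α + β) = u α * u β := by
    intro α β
    simp only [hu]
    rw [← map_mul, AddMonoidAlgebra.single_mul_single, one_mul]
  have huinv : ∀ α, u (-α) * u α = 1 := by
    intro α
    rw [← humul, neg_add_cancel]
    simp only [hu]
    rw [← AddMonoidAlgebra.one_def, map_one]
  set lam : (ι →₀ ℤ) → A := fun α => u (-α) * dd (u α) with hlamdef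
  have hlam_apply : ∀ α, lam α = u (-α) * dd (u α) := fun _ => rfl
  have hlam_add : ∀ α β, lam (α + β) = lam α + lam β := by
    intro α β
    have h1 : lam (α + β) = (u (-β) * u β) * (u (-α) * dd (u α)) +
        (u (-α) * u α) * (u (-β) * dd (u β)) := by
      rw [hlam_apply, neg_add, humul, humul, hdd]
      ring
    rw [h1, huinv, huinv, one_mul, one_mul, hlam_apply, hlam_apply]
  have hloga : ∀ α, dd (u α) = u α * lam α := by
    intro α
    calc dd (u α) = 1 * dd (u α) := (one_mul _).symm
    _ = (u α * u (-α)) * dd (u α) := by rw [mul_comm (u α) (u (-α)), huinv]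
    _ = u α * lam α := by rw [hlam_apply]; ring
  let Lam : (ι →₀ ℤ) →+ A := AddMonoidHom.mk' lam hlam_add
  have hLam : ∀ x, Lam x = lam x := fun _ => rfl
  have hsum_single : ∀ α : ι →₀ ℤ, (∑ i : ι, Finsupp.single i (α i)) = α := by
    intro α
    ext j
    rw [Finsupp.finset_sum_apply]
    simp [Finsupp.single_apply]
  have hlam_sum : ∀ α : ι →₀ ℤ,
      lam α = ∑ i : ι, (α i : ℂ) • lam (Finsupp.single i 1) := by
    intro α
    calc lam α = Lam (∑ i : ι, Finsupp.single i (α i)) := by rw [hsum_single, hLam]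
    _ = ∑ i : ι, Lam (Finsupp.single i (α i)) := map_sum _ _ _
    _ = ∑ i : ι, (α i : ℂ) • lam (Finsupp.single i 1) := by
        refine Finset.sum_congr rfl fun i _ => ?_
        have h : Finsupp.single i (α i) = (α i) • Finsupp.single i (1 : ℤ) := by
          rw [Finsupp.smul_single, smul_eq_mul, mul_one]
        rw [h, map_zsmul, Int.cast_smul_eq_zsmul ℂ, hLam]
  set μ : ι × ℕ → A :=
    fun p => ((p.2.factorial : ℂ))⁻¹ • (dd ^ p.2) (lam (Finsupp.single p.1 1)) with hμdef
  have hμ_apply : ∀ i n,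
      μ (i, n) = ((n.factorial : ℂ))⁻¹ • (dd ^ n) (lam (Finsupp.single i 1)) :=
    fun _ _ => rfl
  have hμ0 : ∀ i, μ (i, 0) = lam (Finsupp.single i 1) := by
    intro i
    rw [hμ_apply]
    simp
  have hsc : ∀ n : ℕ, ((n : ℂ) + 1) * (((n + 1).factorial : ℂ))⁻¹ = ((n.factorial : ℂ))⁻¹ := by
    intro n
    have h1 : (((n + 1).factorial : ℕ) : ℂ) = ((n : ℂ) + 1) * (n.factorial : ℂ) := by
      rw [Nat.factorial_succ]; push_cast; ring
    have h2 : ((n : ℂ) + 1) ≠ 0 := Nat.cast_add_one_ne_zero n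
    rw [h1, mul_inv, ← mul_assoc, mul_inv_cancel₀ h2, one_mul]
  have hμ_succ : ∀ (i : ι) (n : ℕ), ((n : ℂ) + 1) • μ (i, n + 1) = dd (μ (i, n)) := by
    intro i n
    rw [hμ_apply, hμ_apply, smul_smul, hsc, map_smul]
    congr 1
    rw [← Module.End.mul_apply, ← pow_succ']
  set G : MvPolynomial (ι × ℕ) ℂ →ₐ[ℂ] A := MvPolynomial.aeval μ with hGdef
  set F : (AddMonoidAlgebra ℂ (ι →₀ ℤ) ⊗[ℂ] MvPolynomial (ι × ℕ) ℂ) →ₐ[ℂ] A :=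
    Algebra.TensorProduct.productMap f G with hFdef
  have hFt : ∀ (g : AddMonoidAlgebra ℂ (ι →₀ ℤ)) (p : MvPolynomial (ι × ℕ) ℂ),
      F (g ⊗ₜ[ℂ] p) = f g * G p := fun g p =>
    Algebra.TensorProduct.productMap_apply_tmul f G g p
  have hF1 : ∀ g, F (g ⊗ₜ[ℂ] (1 : MvPolynomial (ι × ℕ) ℂ)) = f g := by
    intro g; rw [hFt, map_one, mul_one]
  have hFX : ∀ (i : ι) (n : ℕ),
      F ((1 : AddMonoidAlgebra ℂ (ι →₀ ℤ)) ⊗ₜ[ℂ] MvPolynomial.X (i, n)) = μ (i, n) := by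
    intro i n
    rw [hFt, map_one, one_mul, hGdef, MvPolynomial.aeval_X]
  have hGlatt : ∀ α : ι →₀ ℤ, G (latticeGen α 0) = lam α := by
    intro α
    rw [latticeGen, map_sum, hlam_sum α]
    refine Finset.sum_congr rfl fun i _ => ?_
    rw [map_smul, hGdef, MvPolynomial.aeval_X, ← hμ0]
  have hD_one : D (1 : AddMonoidAlgebra ℂ (ι →₀ ℤ) ⊗[ℂ] MvPolynomial (ι × ℕ) ℂ) = 0 := by
    have h := hDder 1 1
    simp only [mul_one, one_mul] at h
    exact (left_eq_add.mp h)
  have hdd_one : dd (1 : A) = 0 := by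
    have h := hdd 1 1
    simp only [mul_one, one_mul] at h
    exact (left_eq_add.mp h)
  have hlg : ∀ (i : ι) (n : ℕ),
      latticeGen (Finsupp.single i 1) n = MvPolynomial.X (i, n) := by
    intro i n
    rw [latticeGen, Finset.sum_eq_single i]
    · simp
    · intro j _ hj
      rw [Finsupp.single_eq_of_ne hj]
      simp
    · intro h; exact absurd (Finset.mem_univ i) h
  have hstep : ∀ x y, F (D x) = dd (F x) → F (D y) = dd (F y) →
      F (D (x * y)) = dd (F (x * y)) := by
    intro x y hx hy
    rw [hDder, map_add, map_mul, map_mul, hx, hy, map_mul, hdd]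
  have hD1' : ∀ α : ι →₀ ℤ,
      F (D (AddMonoidAlgebra.single α 1 ⊗ₜ[ℂ] 1)) =
        dd (F (AddMonoidAlgebra.single α 1 ⊗ₜ[ℂ] 1)) := by
    intro α
    rw [hD1, hFt, hF1, hGlatt]
    exact (hloga α).symm
  have hleft : ∀ g : AddMonoidAlgebra ℂ (ι →₀ ℤ),
      F (D (g ⊗ₜ[ℂ] 1)) = dd (F (g ⊗ₜ[ℂ] 1)) := by
    intro g
    induction g using AddMonoidAlgebra.induction_linear with
    | zero => simp [TensorProduct.zero_tmul]
    | add p q hp hq =>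
      rw [TensorProduct.add_tmul, map_add, map_add, hp, hq, map_add, map_add]
    | single a b =>
      have h : (AddMonoidAlgebra.single a b : AddMonoidAlgebra ℂ (ι →₀ ℤ)) ⊗ₜ[ℂ]
            (1 : MvPolynomial (ι × ℕ) ℂ)
          = b • (AddMonoidAlgebra.single a 1 ⊗ₜ[ℂ] 1) := by
        rw [TensorProduct.smul_tmul', AddMonoidAlgebra.smul_single', mul_one]
      rw [h, map_smul, map_smul, hD1' a, map_smul]
      exact (map_smul dd b _).symm
  have hright_X : ∀ (i : ι) (n : ℕ),
      F (D ((1 : AddMonoidAlgebra ℂ (ι →₀ ℤ)) ⊗ₜ[ℂ] MvPolynomial.X (i, n))) =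
        dd (F (1 ⊗ₜ[ℂ] MvPolynomial.X (i, n))) := by
    intro i n
    rw [hD2, map_smul, hFX, hFX]
    exact hμ_succ i n
  have hright : ∀ p : MvPolynomial (ι × ℕ) ℂ,
      F (D ((1 : AddMonoidAlgebra ℂ (ι →₀ ℤ)) ⊗ₜ[ℂ] p)) = dd (F (1 ⊗ₜ[ℂ] p)) := by
    intro p
    induction p using MvPolynomial.induction_on with
    | C a =>
      have h : (1 : AddMonoidAlgebra ℂ (ι →₀ ℤ)) ⊗ₜ[ℂ] MvPolynomial.C a
          = a • (1 : AddMonoidAlgebra ℂ (ι →₀ ℤ) ⊗[ℂ] MvPolynomial (ι × ℕ) ℂ) := by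
        rw [Algebra.TensorProduct.one_def, ← TensorProduct.tmul_smul]
        congr 1
        rw [MvPolynomial.smul_eq_C_mul, mul_one]
      rw [h, map_smul, hD_one, smul_zero, map_zero, map_smul, map_one, map_smul,
        hdd_one, smul_zero]
    | add p q hp hq =>
      rw [TensorProduct.tmul_add, map_add, map_add, hp, hq, map_add, map_add]
    | mul_X p v ih =>
      obtain ⟨i, n⟩ := v
      have h : (1 : AddMonoidAlgebra ℂ (ι →₀ ℤ)) ⊗ₜ[ℂ] (p * MvPolynomial.X (i, n))
          = ((1 : AddMonoidAlgebra ℂ (ι →₀ ℤ)) ⊗ₜ[ℂ] p) *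
            ((1 : AddMonoidAlgebra ℂ (ι →₀ ℤ)) ⊗ₜ[ℂ] MvPolynomial.X (i, n)) := by
        rw [Algebra.TensorProduct.tmul_mul_tmul, one_mul]
      rw [h]
      exact hstep _ _ ih (hright_X i n)
  have hcomm : ∀ x, F (D x) = dd (F x) := by
    intro x
    induction x using TensorProduct.induction_on with
    | zero => simp
    | add x y hx hy => rw [map_add, map_add, hx, hy, map_add, map_add]
    | tmul g p =>
      have h : g ⊗ₜ[ℂ] p = (g ⊗ₜ[ℂ] 1) * ((1 : AddMonoidAlgebra ℂ (ι →₀ ℤ)) ⊗ₜ[ℂ] p) := by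
        rw [Algebra.TensorProduct.tmul_mul_tmul, one_mul, mul_one]
      rw [h]
      exact hstep _ _ (hleft g) (hright p)
  -- key determination lemma
  have hX_det : ∀ F' : (AddMonoidAlgebra ℂ (ι →₀ ℤ) ⊗[ℂ] MvPolynomial (ι × ℕ) ℂ) →ₐ[ℂ] A,
      (∀ g, F' (g ⊗ₜ[ℂ] (1 : MvPolynomial (ι × ℕ) ℂ)) = f g) →
      (∀ x, F' (D x) = dd (F' x)) →
      ∀ (i : ι) (n : ℕ),
        F' ((1 : AddMonoidAlgebra ℂ (ι →₀ ℤ)) ⊗ₜ[ℂ] MvPolynomial.X (i, n)) = μ (i, n) := by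
    intro F' h1 h2 i n
    induction n with
    | zero =>
      have key : (1 : AddMonoidAlgebra ℂ (ι →₀ ℤ)) ⊗ₜ[ℂ] MvPolynomial.X (i, 0)
          = ((AddMonoidAlgebra.single (-(Finsupp.single i 1 : ι →₀ ℤ)) 1 :
                AddMonoidAlgebra ℂ (ι →₀ ℤ)) ⊗ₜ[ℂ] (1 : MvPolynomial (ι × ℕ) ℂ)) *
            ((AddMonoidAlgebra.single (Finsupp.single i 1 : ι →₀ ℤ) 1 :
                AddMonoidAlgebra ℂ (ι →₀ ℤ)) ⊗ₜ[ℂ] MvPolynomial.X (i, 0)) := by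
        rw [Algebra.TensorProduct.tmul_mul_tmul, AddMonoidAlgebra.single_mul_single,
          neg_add_cancel, one_mul, one_mul, ← AddMonoidAlgebra.one_def]
      have key2 : (AddMonoidAlgebra.single (Finsupp.single i 1 : ι →₀ ℤ) 1 :
              AddMonoidAlgebra ℂ (ι →₀ ℤ)) ⊗ₜ[ℂ] MvPolynomial.X (i, 0)
          = D ((AddMonoidAlgebra.single (Finsupp.single i 1 : ι →₀ ℤ) 1 :
              AddMonoidAlgebra ℂ (ι →₀ ℤ)) ⊗ₜ[ℂ] 1) := by
        rw [hD1, hlg]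
      rw [key, map_mul, h1, key2, h2, h1, hμ0]
    | succ n ih =>
      have h := h2 ((1 : AddMonoidAlgebra ℂ (ι →₀ ℤ)) ⊗ₜ[ℂ] MvPolynomial.X (i, n))
      rw [hD2, map_smul, ih] at h
      have hne : ((n : ℂ) + 1) ≠ 0 := Nat.cast_add_one_ne_zero n
      have e1 : F' ((1 : AddMonoidAlgebra ℂ (ι →₀ ℤ)) ⊗ₜ[ℂ] MvPolynomial.X (i, n + 1))
          = ((n : ℂ) + 1)⁻¹ • dd (μ (i, n)) := by
        rw [← h, inv_smul_smul₀ hne]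
      rw [e1, ← hμ_succ i n, inv_smul_smul₀ hne]
  -- final formula for any compatible F'
  have hform : ∀ F' : (AddMonoidAlgebra ℂ (ι →₀ ℤ) ⊗[ℂ] MvPolynomial (ι × ℕ) ℂ) →ₐ[ℂ] A,
      (∀ g, F' (g ⊗ₜ[ℂ] (1 : MvPolynomial (ι × ℕ) ℂ)) = f g) →
      (∀ x, F' (D x) = dd (F' x)) →
      ∀ (α : ι →₀ ℤ) (n : ℕ),
        F' ((1 : AddMonoidAlgebra ℂ (ι →₀ ℤ)) ⊗ₜ[ℂ] latticeGen α n) =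
          ((n.factorial : ℂ))⁻¹ • (dd ^ n) (f (AddMonoidAlgebra.single (-α) 1) *
            dd (f (AddMonoidAlgebra.single α 1))) := by
    intro F' h1 h2 α n
    have e0 : f (AddMonoidAlgebra.single (-α) 1) * dd (f (AddMonoidAlgebra.single α 1))
        = lam α := rfl
    have e1 : (1 : AddMonoidAlgebra ℂ (ι →₀ ℤ)) ⊗ₜ[ℂ] latticeGen α n
        = ∑ i : ι, (α i : ℂ) • ((1 : AddMonoidAlgebra ℂ (ι →₀ ℤ)) ⊗ₜ[ℂ]
            MvPolynomial.X (i, n)) := by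
      rw [latticeGen, TensorProduct.tmul_sum]
      exact Finset.sum_congr rfl fun i _ => TensorProduct.tmul_smul _ _ _
    rw [e1, map_sum, e0, hlam_sum α, map_sum, Finset.smul_sum]
    refine Finset.sum_congr rfl fun i _ => ?_
    rw [map_smul, hX_det F' h1 h2, hμ_apply, map_smul, smul_comm]
  refine ⟨⟨F, ⟨hF1, hcomm⟩, ?_⟩, hform⟩
  intro F' hF'
  obtain ⟨h1, h2⟩ := hF'
  apply Algebra.TensorProduct.ext
  · exact AlgHom.ext fun g => by
      simp only [AlgHom.comp_apply, Algebra.TensorProduct.includeLeft_apply]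
      rw [h1, hF1]
  · apply MvPolynomial.algHom_ext
    rintro ⟨i, n⟩
    simp only [AlgHom.comp_apply, Algebra.TensorProduct.includeRight_apply]
    show F' ((1 : AddMonoidAlgebra ℂ (ι →₀ ℤ)) ⊗ₜ[ℂ] MvPolynomial.X (i, n))
        = F ((1 : AddMonoidAlgebra ℂ (ι →₀ ℤ)) ⊗ₜ[ℂ] MvPolynomial.X (i, n))
    rw [hX_det F' h1 h2, hFX]
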